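/- Let q ≥ 2 and t ≥ 0 be integers. For 0 ≤ b ≤ q−1 define Φ_b = {(i,j) ∈ ℤ² : 0 ≤ i < q²+q, −t − (q+1)b ≤ qi + (q²+q)j < 0}. Then the sum over b = 0, ..., q−1 of #Φ_b equals q²(q−1)/2 + qt. -/

import Mathlib

open Finset

lemma shift_sum (n : ℕ) (hn : 0 < n) (t : ℤ) :
    ∑ b ∈ Finset.range n, (t + 1 + (b:ℤ)) / (n : ℤ)
      = (∑ b ∈ Finset.range n, (t + (b:ℤ)) / (n : ℤ)) + 1 := by
  have hne : (n:ℤ) ≠ 0 := by exact_mod_cast hn.ne'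
  have h1 : ∑ b ∈ Finset.range n, (t + 1 + (b:ℤ)) / (n:ℤ)
      = ∑ b ∈ Finset.range n, (t + ((b:ℤ)+1)) / (n:ℤ) := by
    apply Finset.sum_congr rfl; intro b _; ring_nf
  have h2 : ∑ b ∈ Finset.range (n+1), (t + (b:ℤ)) / (n:ℤ)
      = (∑ b ∈ Finset.range n, (t + ((b:ℤ)+1)) / (n:ℤ)) + (t + 0) / (n:ℤ) := by
    rw [Finset.sum_range_succ']
    push_cast
    rfl

  have h3 : ∑ b ∈ Finset.range (n+1), (t + (b:ℤ)) / (n:ℤ)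
      = (∑ b ∈ Finset.range n, (t + (b:ℤ)) / (n:ℤ)) + (t + (n:ℤ)) / (n:ℤ) := by
    rw [Finset.sum_range_succ]
  have h4 : (t + (n:ℤ)) / (n:ℤ) = t / (n:ℤ) + 1 := by
    have := Int.add_mul_ediv_right t 1 hne
    simpa using this
  have h5 : (t + 0) / (n:ℤ) = t / (n:ℤ) := by ring_nf
  rw [h1]
  omega

lemma hermite_sum (n : ℕ) (hn : 0 < n) (t : ℤ) :
    ∑ b ∈ Finset.range n, (t + (b:ℤ)) / (n : ℤ) = t := by
  induction t using Int.induction_on with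
  | zero =>
    rw [Finset.sum_eq_zero]
    intro b hb
    simp only [Finset.mem_range] at hb
    rw [zero_add]
    exact Int.ediv_eq_zero_of_lt (by positivity) (by exact_mod_cast hb)
  | succ k ih =>
    have := shift_sum n hn k
    push_cast at this ⊢
    omega
  | pred k ih =>
    have := shift_sum n hn (-(k:ℤ) - 1)
    have e : (-(k:ℤ) - 1 + 1) = -(k:ℤ) := by ring
    rw [e] at this
    push_cast at this ih ⊢
    omega

lemma phi_card (q c : ℤ) (hq : 2 ≤ q) (hc : 0 ≤ c) :
    (({p : ℤ × ℤ | 0 ≤ p.1 ∧ p.1 < q ^ 2 + q ∧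
        -c ≤ q * p.1 + (q ^ 2 + q) * p.2 ∧
        q * p.1 + (q ^ 2 + q) * p.2 < 0}).ncard : ℤ)
      = q * (c / q) := by
  have hq0 : (0:ℤ) < q := by omega
  have hq1 : (0:ℤ) < q + 1 := by omega
  set S : Set (ℤ × ℤ) := {p : ℤ × ℤ | 0 ≤ p.1 ∧ p.1 < q ^ 2 + q ∧
        -c ≤ q * p.1 + (q ^ 2 + q) * p.2 ∧
        q * p.1 + (q ^ 2 + q) * p.2 < 0} with hS
  set F : Finset (ℤ × ℤ) := Finset.Ico (0:ℤ) q ×ˢ Finset.Ico (-(c/q)) (0:ℤ) with hF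
  have hcq : 0 ≤ c / q := Int.ediv_nonneg hc hq0.le
  have hdm : c / q * q ≤ c := Int.ediv_mul_le c (by omega)
  have hbij : Set.BijOn (fun p : ℤ × ℤ => (p.1 / (q+1), (q*p.1 + (q^2+q)*p.2)/q)) S ↑F := by
    refine ⟨?_, ?_, ?_⟩
    · rintro ⟨i, j⟩ ⟨h1, h2, h3, h4⟩
      simp only [hF, Finset.coe_product, Set.mem_prod, Finset.coe_Ico, Set.mem_Ico]
      obtain ⟨w, hw⟩ : q ∣ q * i + (q^2+q) * j := ⟨i + (q+1)*j, by ring⟩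
      rw [hw] at h3 h4 ⊢
      rw [Int.mul_ediv_cancel_left _ hq0.ne']
      have hwneg : w < 0 := by nlinarith
      have hwlb : -(c/q) ≤ w := by
        have : -w ≤ c / q := by
          rw [Int.le_ediv_iff_mul_le hq0]
          nlinarith
        omega
      refine ⟨⟨Int.ediv_nonneg h1 hq1.le, ?_⟩, hwlb, hwneg⟩
      rw [Int.ediv_lt_iff_lt_mul hq1]
      nlinarith
    · rintro ⟨i, j⟩ ⟨h1, h2, h3, h4⟩ ⟨i', j'⟩ ⟨h1', h2', h3', h4'⟩ heq
      simp only [Prod.mk.injEq] at heq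
      obtain ⟨heq1, heq2⟩ := heq
      obtain ⟨w, hw⟩ : q ∣ q * i + (q^2+q) * j := ⟨i + (q+1)*j, by ring⟩
      obtain ⟨w', hw'⟩ : q ∣ q * i' + (q^2+q) * j' := ⟨i' + (q+1)*j', by ring⟩
      rw [hw, hw', Int.mul_ediv_cancel_left _ hq0.ne',
        Int.mul_ediv_cancel_left _ hq0.ne'] at heq2
      subst heq2
      have hv : q * i + (q^2+q) * j = q * i' + (q^2+q) * j' := by rw [hw, hw']
      have hij : i - i' = (q+1) * (j' - j) := by
        have h : q * (i - i') = q * ((q+1) * (j' - j)) := by ring_nf; linarith [hv]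
        exact mul_left_cancel₀ hq0.ne' h
      have hmod : i % (q+1) = i' % (q+1) := by
        have : i = i' + (j' - j) * (q+1) := by linarith [hij]
        rw [this, Int.add_mul_emod_self_right]
      have heq1' : i / (q+1) = i' / (q+1) := heq1
      have hieq : i = i' := by
        have d1 := Int.mul_ediv_add_emod i (q+1)
        have d2 := Int.mul_ediv_add_emod i' (q+1)
        rw [heq1', hmod] at d1
        omega
      subst hieq
      have : (q^2+q) * j = (q^2+q) * j' := by linarith [hv]
      have hj : j = j' := by
        have hm0 : (q^2+q) ≠ 0 := by nlinarith
        exact mul_left_cancel₀ hm0 this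
      rw [hj]
    · rintro ⟨a, w⟩ haw
      simp only [hF, Finset.coe_product, Set.mem_prod, Finset.coe_Ico, Set.mem_Ico] at haw
      obtain ⟨⟨ha1, ha2⟩, hw1, hw2⟩ := haw
      set r := w % (q+1) with hr
      set d := w / (q+1) with hd
      have hr1 : 0 ≤ r := Int.emod_nonneg w hq1.ne'
      have hr2 : r < q + 1 := Int.emod_lt_of_pos w hq1
      have hwd : (q+1) * d + r = w := Int.mul_ediv_add_emod w (q+1)
      refine ⟨((q+1)*a + r, d - a), ⟨?_, ?_, ?_, ?_⟩, ?_⟩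
      all_goals dsimp only
      · nlinarith [mul_nonneg (by omega : (0:ℤ) ≤ q+1) ha1]
      · nlinarith [mul_le_mul_of_nonneg_left (by omega : a ≤ q - 1) (by omega : (0:ℤ) ≤ q+1)]
      · have hv : q * ((q+1)*a + r) + (q^2+q) * (d - a) = q * w := by
          linear_combination q * hwd
        rw [hv]
        have : q * (c/q) ≤ c := by nlinarith [hdm]
        nlinarith
      · have hv : q * ((q+1)*a + r) + (q^2+q) * (d - a) = q * w := by
          linear_combination q * hwd
        rw [hv]
        nlinarith
      · simp only [Prod.mk.injEq]
        constructor
        · rw [add_comm, Int.add_mul_ediv_left r a hq1.ne',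
            Int.ediv_eq_zero_of_lt hr1 hr2, zero_add]
        · have hv : q * ((q+1)*a + r) + (q^2+q) * (d - a) = q * w := by
            linear_combination q * hwd
          rw [hv, Int.mul_ediv_cancel_left _ hq0.ne']
  have hcard : S.ncard = F.card := by
    rw [← Set.ncard_coe_finset, ← hbij.image_eq]
    exact (Set.ncard_image_of_injOn hbij.injOn).symm
  rw [hcard]
  rw [hF, Finset.card_product, Int.card_Ico, Int.card_Ico]
  push_cast [Int.toNat_of_nonneg]
  rw [Int.toNat_of_nonneg (by omega), Int.toNat_of_nonneg (by omega)]
  ring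

/-- For q ≥ 2 and t ≥ 0, with Φ_b = {(i,j) : 0 ≤ i < q²+q, −t−(q+1)b ≤ qi+(q²+q)j < 0},
    ∑_{b=0}^{q-1} #Φ_b = q²(q−1)/2 + qt. -/
theorem stmt_7 (q t : ℤ) (hq : 2 ≤ q) (ht : 0 ≤ t) :
    ((∑ b ∈ Finset.range q.toNat,
        ({p : ℤ × ℤ | 0 ≤ p.1 ∧ p.1 < q ^ 2 + q ∧
            -t - (q + 1) * (b : ℤ) ≤ q * p.1 + (q ^ 2 + q) * p.2 ∧
            q * p.1 + (q ^ 2 + q) * p.2 < 0}).ncard : ℕ) : ℤ)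
      = q ^ 2 * (q - 1) / 2 + q * t := by
  have hq0 : (0:ℤ) < q := by omega
  have hqt : (q.toNat : ℤ) = q := Int.toNat_of_nonneg (by omega)
  push_cast
  have step : ∀ b ∈ Finset.range q.toNat,
      (({p : ℤ × ℤ | 0 ≤ p.1 ∧ p.1 < q ^ 2 + q ∧
            -t - (q + 1) * (b : ℤ) ≤ q * p.1 + (q ^ 2 + q) * p.2 ∧
            q * p.1 + (q ^ 2 + q) * p.2 < 0}).ncard : ℤ)
        = q * ((t + (b:ℤ)) / q) + q * (b:ℤ) := by
    intro b _
    have hb0 : (0:ℤ) ≤ (b:ℤ) := Int.natCast_nonneg b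
    have hset : {p : ℤ × ℤ | 0 ≤ p.1 ∧ p.1 < q ^ 2 + q ∧
            -t - (q + 1) * (b : ℤ) ≤ q * p.1 + (q ^ 2 + q) * p.2 ∧
            q * p.1 + (q ^ 2 + q) * p.2 < 0}
        = {p : ℤ × ℤ | 0 ≤ p.1 ∧ p.1 < q ^ 2 + q ∧
            -(t + (q + 1) * (b : ℤ)) ≤ q * p.1 + (q ^ 2 + q) * p.2 ∧
            q * p.1 + (q ^ 2 + q) * p.2 < 0} := by
      ext p
      simp only [Set.mem_setOf_eq]
      constructor <;> intro h <;>
        exact ⟨h.1, h.2.1, by linarith [h.2.2.1], h.2.2.2⟩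
    rw [hset, phi_card q (t + (q+1)*(b:ℤ)) hq (by nlinarith)]
    have he : t + (q + 1) * (b:ℤ) = (t + (b:ℤ)) + (b:ℤ) * q := by ring
    rw [he, Int.add_mul_ediv_right _ _ hq0.ne']
    ring
  rw [Finset.sum_congr rfl step, Finset.sum_add_distrib, ← Finset.mul_sum,
    ← Finset.mul_sum]
  have hherm : ∑ b ∈ Finset.range q.toNat, (t + (b:ℤ)) / q = t := by
    have := hermite_sum q.toNat (by omega) t
    rwa [hqt] at this
  have hgauss : (∑ b ∈ Finset.range q.toNat, (b:ℤ)) * 2 = q * (q - 1) := by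
    have h := Finset.sum_range_id_mul_two q.toNat
    have h2 : ((∑ i ∈ Finset.range q.toNat, i : ℕ) : ℤ) * 2
        = (q.toNat : ℤ) * ((q.toNat - 1 : ℕ) : ℤ) := by exact_mod_cast congrArg (fun n : ℕ => (n : ℤ)) h
    push_cast at h2
    rw [hqt] at h2
    rw [h2]
    congr 1
    omega
  set Sb := ∑ b ∈ Finset.range q.toNat, (b:ℤ) with hSb
  have hdiv : q ^ 2 * (q - 1) / 2 = q * Sb := by
    have : q ^ 2 * (q - 1) = (q * Sb) * 2 := by nlinarith [hgauss]
    rw [this, Int.mul_ediv_cancel _ two_ne_zero]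
  rw [hherm, hdiv]
  ring
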